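/- Let n points move on the circle of radius 1 (in the construction: each point pᵢ has speed 1, direction angle 3π/2 + π/(4i), and at time 0 lies on the unit circle centered at (-1,1) so that its trajectory passes through the origin). Then for any three indices j < k < l, there exist two distinct times t', t'' ∈ ℝ at which p_j, p_k, p_l are collinear; consequently this point set determines exactly 2·(n choose 3) 3-collinearities. -/

import Mathlib

open Real

set_option maxHeartbeats 1000000

/-- Signed area determinant of two vectors in the plane. -/
def sdet (x y : ℝ × ℝ) : ℝ := x.1 * y.2 - x.2 * y.1

section Helpers

lemma cos_lt_one' {x : ℝ} (h1 : 0 < x) (h2 : x < π) : Real.cos x < 1 := by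
  have hs := Real.sin_pos_of_pos_of_lt_pi h1 h2
  have hpy := Real.sin_sq_add_cos_sq x
  have hle := Real.cos_le_one x
  rcases lt_or_eq_of_le hle with h | h
  · exact h
  · nlinarith

lemma sdet_linear_dep {a b c : ℝ × ℝ} (h : sdet (b - a) (c - a) = 0) (hba : b - a ≠ 0) :
    ∃ r : ℝ, c - a = r • (b - a) := by
  simp only [sdet, Prod.fst_sub, Prod.snd_sub] at h
  rcases em (b.1 - a.1 = 0) with h1 | h1
  · have h2 : b.2 - a.2 ≠ 0 := by
      intro h2
      exact hba (by apply Prod.ext <;> simp [sub_eq_zero] at h1 h2 ⊢ <;> assumption)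
    have h3 : c.1 - a.1 = 0 := by
      rcases mul_eq_zero.mp (by linear_combination (c.2 - a.2) * h1 - h :
          (b.2 - a.2) * (c.1 - a.1) = 0) with h' | h'
      · exact absurd h' h2
      · exact h'
    refine ⟨(c.2 - a.2) / (b.2 - a.2), Prod.ext ?_ ?_⟩
    · simp [h1, h3]
    · simp only [Prod.smul_fst, Prod.smul_snd, Prod.fst_sub, Prod.snd_sub, smul_eq_mul]
      field_simp
  · refine ⟨(c.1 - a.1) / (b.1 - a.1), Prod.ext ?_ ?_⟩
    · simp only [Prod.smul_fst, Prod.snd_sub, Prod.fst_sub, smul_eq_mul]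
      field_simp
    · simp only [Prod.smul_snd, Prod.snd_sub, Prod.fst_sub, smul_eq_mul]
      field_simp
      linear_combination h

lemma collinear_iff_sdet (a b c : ℝ × ℝ) :
    Collinear ℝ ({a, b, c} : Set (ℝ × ℝ)) ↔ sdet (b - a) (c - a) = 0 := by
  rw [collinear_iff_of_mem (show a ∈ ({a,b,c} : Set (ℝ×ℝ)) by simp)]
  constructor
  · rintro ⟨v, hv⟩
    obtain ⟨rb, hb⟩ := hv b (by simp)
    obtain ⟨rc, hcc⟩ := hv c (by simp)
    have hb' : b - a = rb • v := by rw [hb]; simp [Prod.ext_iff]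
    have hc' : c - a = rc • v := by rw [hcc]; simp [Prod.ext_iff]
    rw [hb', hc']
    simp [sdet]
    ring
  · intro h
    by_cases hba : b - a = 0
    · have hbeq : b = a := sub_eq_zero.mp hba
      subst hbeq
      refine ⟨c - b, ?_⟩
      rintro q hq
      rcases hq with rfl | rfl | rfl
      · exact ⟨0, by simp⟩
      · exact ⟨0, by simp⟩
      · exact ⟨1, by simp⟩
    · obtain ⟨r, hr⟩ := sdet_linear_dep h hba
      refine ⟨b - a, ?_⟩
      rintro q hq
      rcases hq with rfl | rfl | rfl
      · exact ⟨0, by simp⟩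
      · exact ⟨1, by simp⟩
      · exact ⟨r, by rw [← hr]; simp⟩

lemma mono_core (a b ca cb : ℝ) (hb : 0 < b) (hba : b < a) (ha : a ≤ π/4)
    (hca0 : 0 < ca) (hcaeq : ca^2 - 2*(Real.sin a + Real.cos a)*ca + 1 = 0)
    (hcas : ca ≤ Real.sin a + Real.cos a)
    (hcb0 : 0 < cb) (hcbeq : cb^2 - 2*(Real.sin b + Real.cos b)*cb + 1 = 0)
    (hcbs : cb ≤ Real.sin b + Real.cos b) :
    cb * Real.sin b < ca * Real.sin a := by
  have hpi := Real.pi_gt_three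
  have ha0 : 0 < a := lt_trans hb hba
  have hapi : a < π/2 := by linarith
  have hsa : 0 < Real.sin a := Real.sin_pos_of_pos_of_lt_pi ha0 (by linarith)
  have hsb : 0 < Real.sin b := Real.sin_pos_of_pos_of_lt_pi hb (by linarith)
  have hcoa : 0 < Real.cos a := Real.cos_pos_of_mem_Ioo ⟨by linarith, hapi⟩
  have hcob : 0 < Real.cos b := Real.cos_pos_of_mem_Ioo ⟨by linarith, by linarith⟩
  have hpya := Real.sin_sq_add_cos_sq a
  have hpyb := Real.sin_sq_add_cos_sq b
  have hu0 : 0 ≤ (Real.sin a + Real.cos a) - ca := by linarith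
  have hv0 : 0 ≤ (Real.sin b + Real.cos b) - cb := by linarith
  have hu2 : ((Real.sin a + Real.cos a) - ca)^2 = 2 * Real.sin a * Real.cos a := by
    linear_combination hpya + hcaeq
  have hv2 : ((Real.sin b + Real.cos b) - cb)^2 = 2 * Real.sin b * Real.cos b := by
    linear_combination hpyb + hcbeq
  have hDa : ca * ((Real.sin a + Real.cos a) + ((Real.sin a + Real.cos a) - ca)) = 1 := by
    linear_combination -hcaeq
  have hDb : cb * ((Real.sin b + Real.cos b) + ((Real.sin b + Real.cos b) - cb)) = 1 := by
    linear_combination -hcbeq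
  have hDa0 : 0 < (Real.sin a + Real.cos a) + ((Real.sin a + Real.cos a) - ca) := by linarith
  have hDb0 : 0 < (Real.sin b + Real.cos b) + ((Real.sin b + Real.cos b) - cb) := by linarith
  have h1 : Real.sin b * Real.cos a < Real.sin a * Real.cos b := by
    have hpos : 0 < Real.sin (a - b) :=
      Real.sin_pos_of_pos_of_lt_pi (by linarith) (by linarith)
    rw [Real.sin_sub] at hpos
    linarith
  have h2 : Real.sin b * ((Real.sin a + Real.cos a) - ca)
      ≤ Real.sin a * ((Real.sin b + Real.cos b) - cb) := by
    nlinarith [mul_pos (mul_pos hsa hsb) (sub_pos.mpr h1),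
      sq_nonneg (Real.sin a * ((Real.sin b + Real.cos b) - cb) - Real.sin b * ((Real.sin a + Real.cos a) - ca)),
      mul_nonneg hsa.le hv0, mul_nonneg hsb.le hu0, hu2, hv2]
  have key : Real.sin b * ((Real.sin a + Real.cos a) + ((Real.sin a + Real.cos a) - ca))
      < Real.sin a * ((Real.sin b + Real.cos b) + ((Real.sin b + Real.cos b) - cb)) := by
    nlinarith [h1, h2]
  have h3 : (ca * Real.sin a - cb * Real.sin b) *
      (((Real.sin a + Real.cos a) + ((Real.sin a + Real.cos a) - ca)) *
       ((Real.sin b + Real.cos b) + ((Real.sin b + Real.cos b) - cb)))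
      = Real.sin a * ((Real.sin b + Real.cos b) + ((Real.sin b + Real.cos b) - cb))
        - Real.sin b * ((Real.sin a + Real.cos a) + ((Real.sin a + Real.cos a) - ca)) := by
    linear_combination (Real.sin a * ((Real.sin b + Real.cos b) + ((Real.sin b + Real.cos b) - cb))) * hDa
      - (Real.sin b * ((Real.sin a + Real.cos a) + ((Real.sin a + Real.cos a) - ca))) * hDb
  nlinarith [h3, key, mul_pos hDa0 hDb0]

lemma quad4 (xa ya xb yb xe ye : ℝ)
    (ua : xa^2 + ya^2 = 1) (ub : xb^2 + yb^2 = 1) (ue : xe^2 + ye^2 = 1)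
    (hya : ya < 0) (hyb : yb < 0) (hye : ye < 0)
    (hxa : 0 < xa) (hab : xa < xb) (hbe : xb < xe) :
    0 < (xa*yb - ya*xb) + (xb*ye - yb*xe) - (xa*ye - ya*xe) := by
  have hxb : 0 < xb := lt_trans hxa hab
  have hxe : 0 < xe := lt_trans hxb hbe
  have hp : 0 < xa*yb - ya*xb := by
    nlinarith [mul_pos hxb (neg_pos.mpr hya), mul_pos hxa (neg_pos.mpr hyb), ua, ub]
  have hq : 0 < xb*ye - yb*xe := by
    nlinarith [mul_pos hxe (neg_pos.mpr hyb), mul_pos hxb (neg_pos.mpr hye), ub, ue]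
  have hip2 : xb*xe + yb*ye < 1 := by
    nlinarith [sq_nonneg (xb - xe), sq_nonneg (yb - ye), hbe]
  have hip1 : xa*xb + ya*yb ≤ 1 := by
    nlinarith [sq_nonneg (xa - xb), sq_nonneg (ya - yb)]
  have hr : (xa*ye - ya*xe) = (xa*yb - ya*xb)*(xb*xe + yb*ye) + (xa*xb + ya*yb)*(xb*ye - yb*xe) := by
    linear_combination (-(xa*ye - ya*xe)) * ub
  nlinarith [mul_pos hp (sub_pos.mpr hip2), mul_nonneg hq.le (sub_nonneg.mpr hip1), hr]

lemma Aneg (a b e : ℝ) (he : 0 < e) (heb : e < b) (hba : b < a) (ha : a ≤ π/4) :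
    (Real.sin b * Real.cos a - Real.cos b * Real.sin a)
    + (Real.sin e * Real.cos b - Real.cos e * Real.sin b)
    + (Real.sin a * Real.cos e - Real.cos a * Real.sin e) < 0 := by
  have hpi := Real.pi_gt_three
  have h1 : Real.sin (a - b) = Real.sin a * Real.cos b - Real.cos a * Real.sin b := Real.sin_sub a b
  have h2 : Real.sin (b - e) = Real.sin b * Real.cos e - Real.cos b * Real.sin e := Real.sin_sub b e
  have h4 : Real.sin (a - e) = Real.sin a * Real.cos e - Real.cos a * Real.sin e := Real.sin_sub a e
  have h3 : Real.sin (a - e) = Real.sin (a-b) * Real.cos (b-e) + Real.cos (a-b) * Real.sin (b-e) := by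
    rw [show a - e = (a-b) + (b-e) by ring, Real.sin_add]
  have hsx : 0 < Real.sin (a-b) := Real.sin_pos_of_pos_of_lt_pi (by linarith) (by linarith)
  have hsy : 0 < Real.sin (b-e) := Real.sin_pos_of_pos_of_lt_pi (by linarith) (by linarith)
  have hcy : Real.cos (b-e) < 1 := cos_lt_one' (by linarith) (by linarith)
  have hcx : Real.cos (a-b) ≤ 1 := Real.cos_le_one _
  nlinarith [h1, h2, h3, h4, hsx, hsy, hcy, hcx]

lemma Cpos (a b e ca cb ce : ℝ) (he : 0 < e) (heb : e < b) (hba : b < a) (ha : a ≤ π/4)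
    (hca0 : 0 < ca) (hcaeq : ca^2 - 2*(Real.sin a + Real.cos a)*ca + 1 = 0)
    (hcas : ca ≤ Real.sin a + Real.cos a)
    (hcb0 : 0 < cb) (hcbeq : cb^2 - 2*(Real.sin b + Real.cos b)*cb + 1 = 0)
    (hcbs : cb ≤ Real.sin b + Real.cos b)
    (hce0 : 0 < ce) (hceeq : ce^2 - 2*(Real.sin e + Real.cos e)*ce + 1 = 0)
    (hces : ce ≤ Real.sin e + Real.cos e) :
    0 < (Real.sin b * Real.cos a - Real.cos b * Real.sin a) * (ca * cb)
      + (Real.sin e * Real.cos b - Real.cos e * Real.sin b) * (cb * ce)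
      + (Real.sin a * Real.cos e - Real.cos a * Real.sin e) * (ce * ca) := by
  have hpi := Real.pi_gt_three
  have hb0 : 0 < b := lt_trans he heb
  have ha0 : 0 < a := lt_trans hb0 hba
  have hsa : 0 < Real.sin a := Real.sin_pos_of_pos_of_lt_pi ha0 (by linarith)
  have hsb : 0 < Real.sin b := Real.sin_pos_of_pos_of_lt_pi hb0 (by linarith)
  have hse : 0 < Real.sin e := Real.sin_pos_of_pos_of_lt_pi he (by linarith)
  have hcoa : 0 < Real.cos a := Real.cos_pos_of_mem_Ioo ⟨by linarith, by linarith⟩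
  have hcob : 0 < Real.cos b := Real.cos_pos_of_mem_Ioo ⟨by linarith, by linarith⟩
  have hcoe : 0 < Real.cos e := Real.cos_pos_of_mem_Ioo ⟨by linarith, by linarith⟩
  have hca1 : Real.cos a < 1 := cos_lt_one' ha0 (by linarith)
  have hcb1 : Real.cos b < 1 := cos_lt_one' hb0 (by linarith)
  have hce1 : Real.cos e < 1 := cos_lt_one' he (by linarith)
  have hsa1 : Real.sin a < 1 := by nlinarith [Real.sin_sq_add_cos_sq a]
  have hsb1 : Real.sin b < 1 := by nlinarith [Real.sin_sq_add_cos_sq b]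
  have hse1 : Real.sin e < 1 := by nlinarith [Real.sin_sq_add_cos_sq e]
  have hcale : ca ≤ 1 := by nlinarith [hcaeq, hcas, hca0]
  have hcble : cb ≤ 1 := by nlinarith [hcbeq, hcbs, hcb0]
  have hcele : ce ≤ 1 := by nlinarith [hceeq, hces, hce0]
  have ua : (1 - ca * Real.sin a)^2 + (ca * Real.cos a - 1)^2 = 1 := by
    linear_combination ca^2 * (Real.sin_sq_add_cos_sq a) + hcaeq
  have ub : (1 - cb * Real.sin b)^2 + (cb * Real.cos b - 1)^2 = 1 := by
    linear_combination cb^2 * (Real.sin_sq_add_cos_sq b) + hcbeq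
  have ue : (1 - ce * Real.sin e)^2 + (ce * Real.cos e - 1)^2 = 1 := by
    linear_combination ce^2 * (Real.sin_sq_add_cos_sq e) + hceeq
  have hya : ca * Real.cos a - 1 < 0 := by nlinarith
  have hyb : cb * Real.cos b - 1 < 0 := by nlinarith
  have hye : ce * Real.cos e - 1 < 0 := by nlinarith
  have hxa : 0 < 1 - ca * Real.sin a := by nlinarith
  have hab : 1 - ca * Real.sin a < 1 - cb * Real.sin b := by
    have := mono_core a b ca cb hb0 hba ha hca0 hcaeq hcas hcb0 hcbeq hcbs
    linarith
  have hbe : 1 - cb * Real.sin b < 1 - ce * Real.sin e := by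
    have := mono_core b e cb ce he heb (by linarith) hcb0 hcbeq hcbs hce0 hceeq hces
    linarith
  have H := quad4 (1 - ca * Real.sin a) (ca * Real.cos a - 1)
      (1 - cb * Real.sin b) (cb * Real.cos b - 1)
      (1 - ce * Real.sin e) (ce * Real.cos e - 1)
      ua ub ue hya hyb hye hxa hab hbe
  nlinarith [H]

lemma central (a b e ca cb ce : ℝ) (he : 0 < e) (heb : e < b) (hba : b < a) (ha : a ≤ π/4)
    (hca0 : 0 < ca) (hcaeq : ca^2 - 2*(Real.sin a + Real.cos a)*ca + 1 = 0)
    (hcas : ca ≤ Real.sin a + Real.cos a)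
    (hcb0 : 0 < cb) (hcbeq : cb^2 - 2*(Real.sin b + Real.cos b)*cb + 1 = 0)
    (hcbs : cb ≤ Real.sin b + Real.cos b)
    (hce0 : 0 < ce) (hceeq : ce^2 - 2*(Real.sin e + Real.cos e)*ce + 1 = 0)
    (hces : ce ≤ Real.sin e + Real.cos e) :
    ∃ t' t'' : ℝ, t' < t'' ∧ ∀ t : ℝ,
      ((Real.sin b * Real.cos a - Real.cos b * Real.sin a) * ((t - ca) * (t - cb))
       + (Real.sin e * Real.cos b - Real.cos e * Real.sin b) * ((t - cb) * (t - ce))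
       + (Real.sin a * Real.cos e - Real.cos a * Real.sin e) * ((t - ce) * (t - ca)) = 0
       ↔ t = t' ∨ t = t'') := by
  set s1 := Real.sin b * Real.cos a - Real.cos b * Real.sin a with hs1
  set s2 := Real.sin e * Real.cos b - Real.cos e * Real.sin b with hs2
  set s3 := Real.sin a * Real.cos e - Real.cos a * Real.sin e with hs3
  set A := s1 + s2 + s3 with hA
  set B := -(s1 * (ca + cb) + s2 * (cb + ce) + s3 * (ce + ca)) with hB
  set C := s1 * (ca * cb) + s2 * (cb * ce) + s3 * (ce * ca) with hC
  have hAneg : A < 0 := Aneg a b e he heb hba ha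
  have hCpos : 0 < C := Cpos a b e ca cb ce he heb hba ha hca0 hcaeq hcas hcb0 hcbeq hcbs hce0 hceeq hces
  have hdisc : 0 < B^2 - 4*A*C := by nlinarith [sq_nonneg B, mul_pos (neg_pos.mpr hAneg) hCpos]
  set s := Real.sqrt (B^2 - 4*A*C) with hsdef
  have hs2' : s^2 = B^2 - 4*A*C := Real.sq_sqrt hdisc.le
  have hs0 : 0 < s := Real.sqrt_pos.mpr hdisc
  have hAne : A ≠ 0 := ne_of_lt hAneg
  refine ⟨(-B + s)/(2*A), (-B - s)/(2*A), ?_, ?_⟩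
  · exact div_lt_div_of_neg_of_lt (by linarith : 2*A < 0) (by linarith)
  · intro t
    have hsum : A * ((-B + s)/(2*A) + (-B - s)/(2*A)) = -B := by
      field_simp
      ring
    have hprod : A * ((-B + s)/(2*A) * ((-B - s)/(2*A))) = C := by
      rw [div_mul_div_comm]
      rw [mul_div_assoc']
      rw [div_eq_iff (by positivity : (2*A)*(2*A) ≠ 0)]
      linear_combination -A * hs2'
    have hfact : s1 * ((t - ca) * (t - cb)) + s2 * ((t - cb) * (t - ce)) + s3 * ((t - ce) * (t - ca))
        = A * (t - (-B + s)/(2*A)) * (t - (-B - s)/(2*A)) := by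
      have expand : A * (t - (-B + s)/(2*A)) * (t - (-B - s)/(2*A))
          = A * t^2 - (A * ((-B + s)/(2*A) + (-B - s)/(2*A))) * t
            + A * ((-B + s)/(2*A) * ((-B - s)/(2*A))) := by ring
      rw [expand, hsum, hprod, hA, hB, hC]
      ring
    rw [hfact]
    constructor
    · intro h
      rcases mul_eq_zero.mp h with h' | h'
      · rcases mul_eq_zero.mp h' with h'' | h''
        · exact absurd h'' hAne
        · exact Or.inl (by linarith [sub_eq_zero.mp h''])
      · exact Or.inr (by linarith [sub_eq_zero.mp h'])
    · rintro (rfl | rfl) <;> simp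

lemma exists_sorted_three (T : Finset ℕ) (h : T.card = 3) :
    ∃ j k l : ℕ, j < k ∧ k < l ∧ T = {j, k, l} := by
  obtain ⟨x, y, z, hxy, hxz, hyz, rfl⟩ := Finset.card_eq_three.mp h
  rcases lt_trichotomy x y with h1 | h1 | h1
  · rcases lt_trichotomy y z with h2 | h2 | h2
    · exact ⟨x, y, z, h1, h2, rfl⟩
    · exact absurd h2 hyz
    · rcases lt_trichotomy x z with h3 | h3 | h3
      · exact ⟨x, z, y, h3, h2, by ext w; simp; tauto⟩
      · exact absurd h3 hxz
      · exact ⟨z, x, y, h3, h1, by ext w; simp; tauto⟩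
  · exact absurd h1 hxy
  · rcases lt_trichotomy x z with h2 | h2 | h2
    · exact ⟨y, x, z, h1, h2, by ext w; simp; tauto⟩
    · exact absurd h2 hxz
    · rcases lt_trichotomy y z with h3 | h3 | h3
      · exact ⟨y, z, x, h3, h2, by ext w; simp; tauto⟩
      · exact absurd h3 hyz
      · exact ⟨z, y, x, h3, h1, by ext w; simp; tauto⟩

end Helpers

theorem lower_bound_construction_two_n_choose_three_collinearities
    (n : ℕ) (θ : ℕ → ℝ) (hθ : ∀ i : ℕ, θ i = 3 * π / 2 + π / (4 * (i : ℝ)))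
    (d : ℕ → ℝ × ℝ) (hd : ∀ i : ℕ, d i = (cos (θ i), sin (θ i)))
    (c : ℕ → ℝ)
    (hc : ∀ i : ℕ, 1 ≤ i → i ≤ n →
      0 < c i ∧
      ((-(c i) • d i).1 + 1) ^ 2 + ((-(c i) • d i).2 - 1) ^ 2 = 1 ∧
      (∀ s : ℝ, 0 < s → ((-s • d i).1 + 1) ^ 2 + ((-s • d i).2 - 1) ^ 2 = 1 →
        c i ≤ s))
    (p : ℕ → ℝ → ℝ × ℝ)
    (hp : ∀ (i : ℕ) (t : ℝ), p i t = -(c i) • d i + t • d i) :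
    (∀ j k l : ℕ, 1 ≤ j → j < k → k < l → l ≤ n →
      ∃ t' t'' : ℝ, t' ≠ t'' ∧
        sdet (p k t' - p j t') (p l t' - p j t') = 0 ∧
        sdet (p k t'' - p j t'') (p l t'' - p j t'') = 0) ∧
    {x : Finset ℕ × ℝ | x.1 ⊆ Finset.Icc 1 n ∧ x.1.card = 3 ∧
        ¬ (∀ s : ℝ, Collinear ℝ ((fun i => p i s) '' ↑x.1)) ∧
        Collinear ℝ ((fun i => p i x.2) '' ↑x.1)}.ncard = 2 * n.choose 3 := by
  classical
  have hθ' : ∀ i : ℕ, θ i = π + (π/2 + π/(4*(i:ℝ))) := fun i => by rw [hθ]; ring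
  have hcosθ : ∀ i : ℕ, Real.cos (θ i) = Real.sin (π/(4*(i:ℝ))) := by
    intro i
    rw [hθ' i]
    simp [Real.cos_add, Real.sin_add]
  have hsinθ : ∀ i : ℕ, Real.sin (θ i) = -Real.cos (π/(4*(i:ℝ))) := by
    intro i
    rw [hθ' i]
    simp [Real.cos_add, Real.sin_add]
  have hpt : ∀ (i : ℕ) (t : ℝ), p i t
      = ((t - c i) * Real.sin (π/(4*(i:ℝ))), -((t - c i) * Real.cos (π/(4*(i:ℝ))))) := by
    intro i t
    rw [hp, hd]
    rw [Prod.ext_iff]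
    constructor
    · simp [hcosθ i]
      ring
    · simp [hsinθ i]
      ring
  -- per-index quadratic facts
  have hq : ∀ i : ℕ, 1 ≤ i → i ≤ n →
      0 < c i ∧
      (c i)^2 - 2*(Real.sin (π/(4*(i:ℝ))) + Real.cos (π/(4*(i:ℝ))))*(c i) + 1 = 0 ∧
      c i ≤ Real.sin (π/(4*(i:ℝ))) + Real.cos (π/(4*(i:ℝ))) := by
    intro i h1 h2
    obtain ⟨hpos, hcirc, hmin⟩ := hc i h1 h2
    rw [hd] at hcirc
    simp only [Prod.smul_fst, Prod.smul_snd, smul_eq_mul, hcosθ i, hsinθ i] at hcirc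
    have hpy := Real.sin_sq_add_cos_sq (π/(4*(i:ℝ)))
    have hquad : (c i)^2 - 2*(Real.sin (π/(4*(i:ℝ))) + Real.cos (π/(4*(i:ℝ))))*(c i) + 1 = 0 := by
      linear_combination hcirc - (c i)^2 * hpy
    refine ⟨hpos, hquad, ?_⟩
    have hprod : (c i) * (2*(Real.sin (π/(4*(i:ℝ))) + Real.cos (π/(4*(i:ℝ)))) - c i) = 1 := by
      linear_combination -hquad
    have hpos2 : 0 < 2*(Real.sin (π/(4*(i:ℝ))) + Real.cos (π/(4*(i:ℝ)))) - c i := by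
      nlinarith [hprod, hpos]
    have hcirc2 : ((-(2*(Real.sin (π/(4*(i:ℝ))) + Real.cos (π/(4*(i:ℝ)))) - c i) • d i).1 + 1) ^ 2
        + ((-(2*(Real.sin (π/(4*(i:ℝ))) + Real.cos (π/(4*(i:ℝ)))) - c i) • d i).2 - 1) ^ 2 = 1 := by
      rw [hd]
      simp only [Prod.smul_fst, Prod.smul_snd, smul_eq_mul, hcosθ i, hsinθ i]
      linear_combination ((2*(Real.sin (π/(4*(i:ℝ))) + Real.cos (π/(4*(i:ℝ)))) - c i)^2) * hpy + hquad
    have := hmin _ hpos2 hcirc2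
    linarith
  -- the main per-triple statement
  have htriple : ∀ j k l : ℕ, 1 ≤ j → j < k → k < l → l ≤ n →
      ∃ t' t'' : ℝ, t' < t'' ∧ ∀ t : ℝ,
        (sdet (p k t - p j t) (p l t - p j t) = 0 ↔ t = t' ∨ t = t'') := by
    intro j k l hj hjk hkl hln
    have hj1 : (1:ℝ) ≤ (j:ℝ) := by exact_mod_cast hj
    have hjk' : (j:ℝ) < (k:ℝ) := by exact_mod_cast hjk
    have hkl' : (k:ℝ) < (l:ℝ) := by exact_mod_cast hkl
    have hpi := Real.pi_pos
    have hl0 : (0:ℝ) < (l:ℝ) := by linarith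
    have hk0 : (0:ℝ) < (k:ℝ) := by linarith
    have hj0 : (0:ℝ) < (j:ℝ) := by linarith
    have he : 0 < π/(4*(l:ℝ)) := by positivity
    have heb : π/(4*(l:ℝ)) < π/(4*(k:ℝ)) := by gcongr
    have hba : π/(4*(k:ℝ)) < π/(4*(j:ℝ)) := by gcongr
    have ha : π/(4*(j:ℝ)) ≤ π/4 := by
      rw [div_le_div_iff₀ (by positivity) (by norm_num)]
      nlinarith [hj1, hpi]
    obtain ⟨hj0', hjeq, hjs⟩ := hq j hj (by omega)
    obtain ⟨hk0', hkeq, hks⟩ := hq k (by omega) (by omega)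
    obtain ⟨hl0', hleq, hls⟩ := hq l (by omega) hln
    obtain ⟨t', t'', hlt, hiff⟩ := central (π/(4*(j:ℝ))) (π/(4*(k:ℝ))) (π/(4*(l:ℝ)))
      (c j) (c k) (c l) he heb hba ha hj0' hjeq hjs hk0' hkeq hks hl0' hleq hls
    refine ⟨t', t'', hlt, ?_⟩
    intro t
    rw [← hiff t]
    constructor
    · intro h
      rw [hpt j, hpt k, hpt l] at h
      simp only [sdet, Prod.fst_sub, Prod.snd_sub] at h
      linear_combination h
    · intro h
      rw [hpt j, hpt k, hpt l]
      simp only [sdet, Prod.fst_sub, Prod.snd_sub]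
      linear_combination h
  constructor
  · intro j k l hj hjk hkl hln
    obtain ⟨t', t'', hlt, hiff⟩ := htriple j k l hj hjk hkl hln
    exact ⟨t', t'', ne_of_lt hlt, (hiff t').mpr (Or.inl rfl), (hiff t'').mpr (Or.inr rfl)⟩
  · -- counting
    have key : ∀ T : Finset ℕ, ∃ u v : ℝ, T ⊆ Finset.Icc 1 n → T.card = 3 →
        u < v ∧ ∀ t : ℝ, (Collinear ℝ ((fun i => p i t) '' ↑T) ↔ t = u ∨ t = v) := by
      intro T
      by_cases hT : T ⊆ Finset.Icc 1 n ∧ T.card = 3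
      · obtain ⟨hsub, hcard⟩ := hT
        obtain ⟨j, k, l, hjk, hkl, rfl⟩ := exists_sorted_three T hcard
        have hjmem : j ∈ Finset.Icc 1 n := hsub (by simp)
        have hlmem : l ∈ Finset.Icc 1 n := hsub (by simp)
        rw [Finset.mem_Icc] at hjmem hlmem
        obtain ⟨t', t'', hlt, hiff⟩ := htriple j k l hjmem.1 hjk hkl hlmem.2
        refine ⟨t', t'', fun _ _ => ⟨hlt, ?_⟩⟩
        intro t
        have himg : ((fun i => p i t) '' ↑({j, k, l} : Finset ℕ))
            = ({p j t, p k t, p l t} : Set (ℝ × ℝ)) := by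
          simp [Set.image_insert_eq]
        rw [himg, collinear_iff_sdet]
        exact hiff t
      · exact ⟨0, 1, fun h1 h2 => absurd ⟨h1, h2⟩ hT⟩
    choose u v hkey using key
    have hSF : {x : Finset ℕ × ℝ | x.1 ⊆ Finset.Icc 1 n ∧ x.1.card = 3 ∧
        ¬ (∀ s : ℝ, Collinear ℝ ((fun i => p i s) '' ↑x.1)) ∧
        Collinear ℝ ((fun i => p i x.2) '' ↑x.1)}
        = ↑(((Finset.Icc 1 n).powersetCard 3).biUnion
            (fun T => ({(T, u T), (T, v T)} : Finset (Finset ℕ × ℝ)))) := by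
      ext ⟨T, t⟩
      simp only [Set.mem_setOf_eq, Finset.coe_biUnion, Set.mem_iUnion, Finset.mem_coe,
        Finset.mem_biUnion, Finset.mem_powersetCard, Finset.mem_insert, Finset.mem_singleton,
        Prod.mk.injEq]
      constructor
      · rintro ⟨hsub, hcard, hnot, hcol⟩
        obtain ⟨hlt, hiff⟩ := hkey T hsub hcard
        rcases (hiff t).mp hcol with h | h
        · exact ⟨T, ⟨hsub, hcard⟩, Or.inl ⟨rfl, h⟩⟩
        · exact ⟨T, ⟨hsub, hcard⟩, Or.inr ⟨rfl, h⟩⟩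
      · rintro ⟨T', ⟨hsub, hcard⟩, h | h⟩ <;>
        · obtain ⟨rfl, rfl⟩ := h
          obtain ⟨hlt, hiff⟩ := hkey T hsub hcard
          refine ⟨hsub, hcard, ?_, ?_⟩
          · intro hall
            have h2 := (hiff (v T + 1)).mp (hall (v T + 1))
            rcases h2 with h2 | h2 <;> linarith
          · apply (hiff _).mpr
            tauto
    rw [hSF, Set.ncard_coe_finset]
    rw [Finset.card_biUnion]
    · have hcards : ∀ T ∈ (Finset.Icc 1 n).powersetCard 3,
          ({(T, u T), (T, v T)} : Finset (Finset ℕ × ℝ)).card = 2 := by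
        intro T hT
        rw [Finset.mem_powersetCard] at hT
        obtain ⟨hlt, _⟩ := hkey T hT.1 hT.2
        rw [Finset.card_insert_of_notMem, Finset.card_singleton]
        simp only [Finset.mem_singleton, Prod.mk.injEq, not_and]
        intro _
        exact ne_of_lt hlt
      rw [Finset.sum_congr rfl hcards, Finset.sum_const, smul_eq_mul,
        Finset.card_powersetCard, Nat.card_Icc]
      simp [mul_comm]
    · intro T hT T' hT' hne
      rw [Function.onFun, Finset.disjoint_left]
      rintro ⟨S, w⟩ hmem hmem'
      simp only [Finset.mem_insert, Finset.mem_singleton, Prod.mk.injEq] at hmem hmem'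
      apply hne
      rcases hmem with ⟨rfl, _⟩ | ⟨rfl, _⟩ <;> rcases hmem' with ⟨rfl, _⟩ | ⟨rfl, _⟩ <;> rfl
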